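/- For k ≥ 2, det B_k = p · Σ_{j=0}^{k-1} c_I^j (c_I + λ)^{k-1-j}, where B_k is the matrix with c_I on the diagonal (first k-1 rows), -c_I-λ on the superdiagonal, last row all p, and zeros elsewhere. -/

import Mathlib

/-- The `k × k` matrix `B_k`: diagonal entries `c_I` in the first `k-1` rows,
superdiagonal entries `-c_I - λ`, last row all `p`, other entries `0`. -/
def Bmat (cI p lam : ℝ) (k : ℕ) : Matrix (Fin k) (Fin k) ℝ :=
  Matrix.of fun i j =>
    if i.val = k - 1 then p
    else if j.val = i.val then cI
    else if j.val = i.val + 1 then -cI - lam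
    else 0

lemma Bmat_succ_succ (cI p lam : ℝ) (n : ℕ) :
    (Bmat cI p lam (n + 2)).submatrix Fin.succ Fin.succ = Bmat cI p lam (n + 1) := by
  ext a b
  simp only [Matrix.submatrix_apply, Bmat, Matrix.of_apply, Fin.val_succ]
  split_ifs <;> first | rfl | omega

lemma Bmat_minor_last (cI p lam : ℝ) (n : ℕ) :
    ((Bmat cI p lam (n + 2)).submatrix (Fin.last (n + 1)).succAbove Fin.succ).det
      = (-cI - lam) ^ (n + 1) := by
  rw [Matrix.det_of_lowerTriangular]
  · rw [Finset.prod_congr rfl (g := fun _ => -cI - lam) (fun i _ => ?_), Finset.prod_const,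
      Finset.card_univ, Fintype.card_fin]
    simp only [Matrix.submatrix_apply, Bmat, Matrix.of_apply, Fin.val_succ,
      Fin.succAbove_last, Fin.coe_castSucc]
    have hi : (i : ℕ) < n + 1 := i.isLt
    rw [if_neg (by omega), if_neg (by omega)]
    simp
  · intro i j hij
    simp only [OrderDual.toDual_lt_toDual] at hij
    simp only [Matrix.submatrix_apply, Bmat, Matrix.of_apply, Fin.val_succ,
      Fin.succAbove_last, Fin.coe_castSucc]
    have hij' : (i : ℕ) < (j : ℕ) := hij
    have hi : (i : ℕ) < n + 1 := i.isLt
    rw [if_neg (by omega), if_neg (by omega), if_neg (by omega)]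

lemma Bmat_det (cI p lam : ℝ) (n : ℕ) :
    (Bmat cI p lam (n + 1)).det
      = p * ∑ j ∈ Finset.range (n + 1), cI ^ j * (cI + lam) ^ (n - j) := by
  induction n with
  | zero =>
    simp [Bmat, Matrix.det_fin_one]
  | succ n ih =>
    rw [Matrix.det_succ_column_zero, Fin.sum_univ_succ]
    have hzero : ∀ i : Fin (n + 1), i ≠ Fin.last n →
        (-1 : ℝ) ^ ((i.succ : Fin (n + 2)) : ℕ) * Bmat cI p lam (n + 2) i.succ 0 *
          ((Bmat cI p lam (n + 2)).submatrix i.succ.succAbove Fin.succ).det = 0 := by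
      intro i hi
      have hi' : (i : ℕ) ≠ n := fun h => hi (Fin.ext h)
      have : Bmat cI p lam (n + 2) i.succ 0 = 0 := by
        simp only [Bmat, Matrix.of_apply, Fin.val_succ, Fin.val_zero]
        have := i.isLt
        split_ifs with h1 h2
        · norm_num at h1
          omega
        · exact h2.elim
        · rfl
      rw [this]; ring
    rw [Fintype.sum_eq_single (Fin.last n) hzero]
    have h00 : Bmat cI p lam (n + 2) 0 0 = cI := by
      simp only [Bmat, Matrix.of_apply, Fin.val_zero]
      rw [if_neg (by omega)]
      simp
    have hlast : Bmat cI p lam (n + 2) (Fin.last n).succ 0 = p := by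
      simp only [Bmat, Matrix.of_apply, Fin.val_succ, Fin.val_last]
      rw [if_pos (by omega)]
    have hsuccabove : ((Fin.last n).succ : Fin (n + 2)).succAbove = (Fin.last (n + 1)).succAbove := by
      congr 1
    rw [h00, hlast, hsuccabove, Bmat_minor_last]
    have hsub : (Fin.succAbove 0 : Fin (n + 1) → Fin (n + 2)) = Fin.succ := by
      funext a; exact Fin.succAbove_zero ▸ rfl
    rw [show ((0 : Fin (n + 2)).succAbove) = (Fin.succ : Fin (n + 1) → Fin (n + 2)) from
      Fin.succAbove_zero, Bmat_succ_succ, ih]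
    have hsign : ((-1 : ℝ)) ^ (((Fin.last n).succ : Fin (n + 2)) : ℕ) * (-cI - lam) ^ (n + 1)
        = (cI + lam) ^ (n + 1) := by
      rw [Fin.val_succ, Fin.val_last, ← mul_pow]
      ring_nf
    rw [Fin.val_zero, pow_zero, one_mul, mul_comm ((-1 : ℝ) ^ _) p, mul_assoc, hsign]
    rw [Finset.sum_range_succ' _ (n + 1)]
    have hterm : ∀ j ∈ Finset.range (n + 1),
        cI ^ (j + 1) * (cI + lam) ^ (n + 1 - (j + 1)) = cI * (cI ^ j * (cI + lam) ^ (n - j)) := by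
      intro j _
      have h : n + 1 - (j + 1) = n - j := by omega
      rw [h, pow_succ]
      ring
    rw [Finset.sum_congr rfl hterm, ← Finset.mul_sum]
    simp only [pow_zero, Nat.sub_zero, one_mul]
    ring

theorem stmt_1 (cI p lam : ℝ) (k : ℕ) (hk : 2 ≤ k) :
    (Bmat cI p lam k).det
      = p * ∑ j ∈ Finset.range k, cI ^ j * (cI + lam) ^ (k - 1 - j) := by
  obtain ⟨n, rfl⟩ : ∃ n, k = n + 1 := ⟨k - 1, by omega⟩
  rw [Bmat_det]
  congr 1
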